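/- For any good edge-labeling λ of the propagation gadget P taking at most 2 distinct values (i.e., any 2-gel of P), the two bones of P receive the same label: λ(u_1 u_2) = λ(v_1 v_2). -/

import Mathlib

/-- A walk is *increasing* with respect to an edge-labeling if the sequence of labels of its
edges, traversed from the first endpoint to the last, is non-decreasing. -/
def IsIncreasing {V : Type*} (G : SimpleGraph V) (lab : Sym2 V → ℝ) {x y : V}
    (p : G.Walk x y) : Prop :=
  (p.edges.map lab).Chain' (· ≤ ·)

/-- An edge-labeling is *good* if for every ordered pair `(x, y)` of vertices there do not
exist two distinct increasing paths from `x` to `y`. -/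
def IsGoodLabeling {V : Type*} (G : SimpleGraph V) (lab : Sym2 V → ℝ) : Prop :=
  ∀ (x y : V) (p q : G.Walk x y), p.IsPath → q.IsPath →
    IsIncreasing G lab p → IsIncreasing G lab q → p = q

/-- The propagation gadget, with vertices `0 = u₁`, `1 = u₂`, `2 = v₁`, `3 = v₂`,
`4 = w₁`, `5 = w₁'`, `6 = w₂`, `7 = w₂'`: the two bones `u₁u₂`, `v₁v₂` together with,
for each `i ∈ {1,2}`, two internally disjoint paths of length two from `uᵢ` to `vᵢ`. -/
def PropGadget : SimpleGraph (Fin 8) :=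
  SimpleGraph.fromEdgeSet
    {s(0, 1), s(2, 3), s(0, 4), s(4, 2), s(0, 5), s(5, 2), s(1, 6), s(6, 3), s(1, 7), s(7, 3)}

lemma two_of_three {s : Set ℝ} (hfin : s.Finite) (hcard : s.ncard ≤ 2) {x y z : ℝ}
    (hx : x ∈ s) (hy : y ∈ s) (hz : z ∈ s) : x = y ∨ x = z ∨ y = z := by
  by_contra hc
  push_neg at hc
  have h3 : ({x, y, z} : Set ℝ).ncard = 3 := by
    rw [Set.ncard_insert_of_notMem (by simp [hc.1, hc.2.1])
        ((Set.finite_singleton z).insert y),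
      Set.ncard_insert_of_notMem (by simp [hc.2.2]) (Set.finite_singleton z),
      Set.ncard_singleton]
  have hsub : ({x, y, z} : Set ℝ) ⊆ s := by
    intro t ht
    rcases ht with rfl | rfl | rfl <;> assumption
  have := Set.ncard_le_ncard hsub hfin
  omega

lemma adj01 : PropGadget.Adj 0 1 := by simp [PropGadget]
lemma adj23 : PropGadget.Adj 2 3 := by simp [PropGadget]
lemma adj04 : PropGadget.Adj 0 4 := by simp [PropGadget]
lemma adj42 : PropGadget.Adj 4 2 := by simp [PropGadget]
lemma adj05 : PropGadget.Adj 0 5 := by simp [PropGadget]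
lemma adj52 : PropGadget.Adj 5 2 := by simp [PropGadget]
lemma adj16 : PropGadget.Adj 1 6 := by simp [PropGadget]
lemma adj63 : PropGadget.Adj 6 3 := by simp [PropGadget]
lemma adj17 : PropGadget.Adj 1 7 := by simp [PropGadget]
lemma adj73 : PropGadget.Adj 7 3 := by simp [PropGadget]

/-- Two distinct increasing paths of length 2 contradict goodness. -/
lemma L2 (lab : Sym2 (Fin 8) → ℝ) (hgood : IsGoodLabeling PropGadget lab)
    {x y w w' : Fin 8} (hne : w ≠ w')
    (h1 : PropGadget.Adj x w) (h2 : PropGadget.Adj w y)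
    (h3 : PropGadget.Adj x w') (h4 : PropGadget.Adj w' y)
    (hnd : ([x, w, y] : List (Fin 8)).Nodup) (hnd' : ([x, w', y] : List (Fin 8)).Nodup)
    (i1 : lab s(x, w) ≤ lab s(w, y)) (i2 : lab s(x, w') ≤ lab s(w', y)) : False := by
  have := hgood x y (.cons h1 (.cons h2 .nil)) (.cons h3 (.cons h4 .nil))
    (by simp [SimpleGraph.Walk.isPath_def]; simpa using hnd)
    (by simp [SimpleGraph.Walk.isPath_def]; simpa using hnd')
    (by simp [IsIncreasing, List.Chain', i1]) (by simp [IsIncreasing, List.Chain', i2])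
  have := congrArg SimpleGraph.Walk.support this
  simp at this
  exact hne this

/-- Two distinct increasing paths of length 3 contradict goodness. -/
lemma L3 (lab : Sym2 (Fin 8) → ℝ) (hgood : IsGoodLabeling PropGadget lab)
    {x y a b c d : Fin 8} (hne : a ≠ c)
    (h1 : PropGadget.Adj x a) (h2 : PropGadget.Adj a b) (h3 : PropGadget.Adj b y)
    (h4 : PropGadget.Adj x c) (h5 : PropGadget.Adj c d) (h6 : PropGadget.Adj d y)
    (hnd : ([x, a, b, y] : List (Fin 8)).Nodup) (hnd' : ([x, c, d, y] : List (Fin 8)).Nodup)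
    (i1 : lab s(x, a) ≤ lab s(a, b)) (i2 : lab s(a, b) ≤ lab s(b, y))
    (i3 : lab s(x, c) ≤ lab s(c, d)) (i4 : lab s(c, d) ≤ lab s(d, y)) : False := by
  have := hgood x y (.cons h1 (.cons h2 (.cons h3 .nil))) (.cons h4 (.cons h5 (.cons h6 .nil)))
    (by simp [SimpleGraph.Walk.isPath_def]; simpa using hnd)
    (by simp [SimpleGraph.Walk.isPath_def]; simpa using hnd')
    (by simp [IsIncreasing, List.Chain', i1, i2]) (by simp [IsIncreasing, List.Chain', i3, i4])
  have := congrArg SimpleGraph.Walk.support this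
  simp at this
  exact hne this.1

/-- For any good edge-labeling of the propagation gadget taking at most two distinct values
(i.e. any `2`-gel), the two bones `u₁u₂` and `v₁v₂` receive the same label. -/
theorem propagation_gadget_bones_equal (lab : Sym2 (Fin 8) → ℝ)
    (hgood : IsGoodLabeling PropGadget lab)
    (h2 : (lab '' PropGadget.edgeSet).ncard ≤ 2) :
    lab s(0, 1) = lab s(2, 3) := by
  by_contra hne
  have sw : ∀ u v : Fin 8, lab s(u, v) = lab s(v, u) := fun u v => congrArg lab Sym2.eq_swap
  have hfin : (lab '' PropGadget.edgeSet).Finite := (Set.toFinite _).image lab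
  have mem : ∀ e ∈ PropGadget.edgeSet, lab e ∈ lab '' PropGadget.edgeSet :=
    fun e he => ⟨e, he, rfl⟩
  have hv : ∀ e ∈ PropGadget.edgeSet, lab e = lab s(0, 1) ∨ lab e = lab s(2, 3) := by
    intro e he
    rcases two_of_three hfin h2 (mem s(0, 1) (by simp [PropGadget])) (mem s(2, 3) (by simp [PropGadget]))
      (mem _ he) with h | h | h
    · exact absurd h hne
    · exact Or.inl h.symm
    · exact Or.inr h.symm
  have ha1 := hv s(0, 4) (by simp [PropGadget])
  have hb1 := hv s(4, 2) (by simp [PropGadget])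
  have ha2 := hv s(0, 5) (by simp [PropGadget])
  have hb2 := hv s(5, 2) (by simp [PropGadget])
  have hc1 := hv s(1, 6) (by simp [PropGadget])
  have hd1 := hv s(6, 3) (by simp [PropGadget])
  have hc2 := hv s(1, 7) (by simp [PropGadget])
  have hd2 := hv s(7, 3) (by simp [PropGadget])
  have f1 : ¬(lab s(0, 4) ≤ lab s(4, 2) ∧ lab s(0, 5) ≤ lab s(5, 2)) := fun ⟨u, v⟩ =>
    L2 lab hgood (by decide) adj04 adj42 adj05 adj52 (by decide) (by decide) u v
  have f2 : ¬(lab s(4, 2) ≤ lab s(0, 4) ∧ lab s(5, 2) ≤ lab s(0, 5)) := fun ⟨u, v⟩ =>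
    L2 lab hgood (by decide) adj42.symm adj04.symm adj52.symm adj05.symm (by decide) (by decide)
      (by rw [sw 2 4, sw 4 0]; exact u) (by rw [sw 2 5, sw 5 0]; exact v)
  have f3 : ¬(lab s(1, 6) ≤ lab s(6, 3) ∧ lab s(1, 7) ≤ lab s(7, 3)) := fun ⟨u, v⟩ =>
    L2 lab hgood (by decide) adj16 adj63 adj17 adj73 (by decide) (by decide) u v
  have f4 : ¬(lab s(6, 3) ≤ lab s(1, 6) ∧ lab s(7, 3) ≤ lab s(1, 7)) := fun ⟨u, v⟩ =>
    L2 lab hgood (by decide) adj63.symm adj16.symm adj73.symm adj17.symm (by decide) (by decide)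
      (by rw [sw 3 6, sw 6 1]; exact u) (by rw [sw 3 7, sw 7 1]; exact v)
  have key1 : (lab s(0, 4) = lab s(0, 1) ∧ lab s(4, 2) = lab s(2, 3)) ∨
      (lab s(0, 5) = lab s(0, 1) ∧ lab s(5, 2) = lab s(2, 3)) := by
    rcases le_total (lab s(0, 1)) (lab s(2, 3)) with h | h <;>
    rcases ha1 with h1 | h1 <;> rcases hb1 with h2' | h2' <;>
    rcases ha2 with h3 | h3 <;> rcases hb2 with h4 | h4 <;>
      first
        | exact Or.inl ⟨h1, h2'⟩
        | exact Or.inr ⟨h3, h4⟩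
        | exact (f1 ⟨by linarith, by linarith⟩).elim
        | exact (f2 ⟨by linarith, by linarith⟩).elim
  have key2 : (lab s(1, 6) = lab s(0, 1) ∧ lab s(6, 3) = lab s(2, 3)) ∨
      (lab s(1, 7) = lab s(0, 1) ∧ lab s(7, 3) = lab s(2, 3)) := by
    rcases le_total (lab s(0, 1)) (lab s(2, 3)) with h | h <;>
    rcases hc1 with h1 | h1 <;> rcases hd1 with h2' | h2' <;>
    rcases hc2 with h3 | h3 <;> rcases hd2 with h4 | h4 <;>
      first
        | exact Or.inl ⟨h1, h2'⟩
        | exact Or.inr ⟨h3, h4⟩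
        | exact (f3 ⟨by linarith, by linarith⟩).elim
        | exact (f4 ⟨by linarith, by linarith⟩).elim
  rcases lt_or_gt_of_ne hne with hlt | hlt
  · -- lab s(0,1) < lab s(2,3): build two increasing paths from 0 to 3
    rcases key1 with ⟨hA, hB⟩ | ⟨hA, hB⟩ <;> rcases key2 with ⟨hC, hD⟩ | ⟨hC, hD⟩
    · exact L3 lab hgood (by decide) adj01 adj16 adj63 adj04 adj42 adj23
        (by decide) (by decide) hC.ge (by rw [hC, hD]; exact hlt.le)
        (by rw [hA, hB]; exact hlt.le) hB.le
    · exact L3 lab hgood (by decide) adj01 adj17 adj73 adj04 adj42 adj23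
        (by decide) (by decide) hC.ge (by rw [hC, hD]; exact hlt.le)
        (by rw [hA, hB]; exact hlt.le) hB.le
    · exact L3 lab hgood (by decide) adj01 adj16 adj63 adj05 adj52 adj23
        (by decide) (by decide) hC.ge (by rw [hC, hD]; exact hlt.le)
        (by rw [hA, hB]; exact hlt.le) hB.le
    · exact L3 lab hgood (by decide) adj01 adj17 adj73 adj05 adj52 adj23
        (by decide) (by decide) hC.ge (by rw [hC, hD]; exact hlt.le)
        (by rw [hA, hB]; exact hlt.le) hB.le
  · -- lab s(2,3) < lab s(0,1): build two increasing paths from 2 to 1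
    rcases key1 with ⟨hA, hB⟩ | ⟨hA, hB⟩ <;> rcases key2 with ⟨hC, hD⟩ | ⟨hC, hD⟩
    · exact L3 lab hgood (by decide) adj23 adj63.symm adj16.symm adj42.symm adj04.symm adj01
        (by decide) (by decide) (by rw [sw 3 6]; exact hD.ge)
        (by rw [sw 3 6, sw 6 1, hC, hD]; exact hlt.le)
        (by rw [sw 2 4, sw 4 0, hA, hB]; exact hlt.le) (by rw [sw 4 0]; exact hA.le)
    · exact L3 lab hgood (by decide) adj23 adj73.symm adj17.symm adj42.symm adj04.symm adj01
        (by decide) (by decide) (by rw [sw 3 7]; exact hD.ge)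
        (by rw [sw 3 7, sw 7 1, hC, hD]; exact hlt.le)
        (by rw [sw 2 4, sw 4 0, hA, hB]; exact hlt.le) (by rw [sw 4 0]; exact hA.le)
    · exact L3 lab hgood (by decide) adj23 adj63.symm adj16.symm adj52.symm adj05.symm adj01
        (by decide) (by decide) (by rw [sw 3 6]; exact hD.ge)
        (by rw [sw 3 6, sw 6 1, hC, hD]; exact hlt.le)
        (by rw [sw 2 5, sw 5 0, hA, hB]; exact hlt.le) (by rw [sw 5 0]; exact hA.le)
    · exact L3 lab hgood (by decide) adj23 adj73.symm adj17.symm adj52.symm adj05.symm adj01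
        (by decide) (by decide) (by rw [sw 3 7]; exact hD.ge)
        (by rw [sw 3 7, sw 7 1, hC, hD]; exact hlt.le)
        (by rw [sw 2 5, sw 5 0, hA, hB]; exact hlt.le) (by rw [sw 5 0]; exact hA.le)
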